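/- Let n ≥ 6 be an even integer. Partition the vertex set of the complete graph K_n into two parts V and U of size n/2 each, let M be a perfect matching between V and U, and let C be (the edge set of) a cycle of length n/2 covering all vertices of V. Then the graph obtained from K_n by removing the edges of M and of C is Eulerian and has n(n−1)/2 − n edges. -/

import Mathlib

open SimpleGraph Finset
open scoped Classical

/-- A simple graph is Eulerian if it is connected and every vertex has even degree. -/
def IsEulerianGraph {V : Type*} [Fintype V] (G : SimpleGraph V) : Prop :=
  G.Connected ∧ ∀ v : V, Even (G.degree v)

theorem complete_minus_matching_minus_cycle_eulerian (n : ℕ) (hn6 : 6 ≤ n)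
    (heven : Even n)
    -- `S` is one part of the partition (the part `V` of the statement); the other part is `Sᶜ`
    (S : Finset (Fin n)) (hS : S.card = n / 2)
    -- `M` is a perfect matching of `K_n` all of whose edges go between `S` and `Sᶜ`
    (M : (⊤ : SimpleGraph (Fin n)).Subgraph) (hM : M.IsPerfectMatching)
    (hMcross : ∀ a b : Fin n, M.Adj a b → (a ∈ S ↔ b ∉ S))
    -- `C` is a cycle of length `n / 2` covering exactly the vertices of `S`
    (x : Fin n) (C : (⊤ : SimpleGraph (Fin n)).Walk x x)
    (hC : C.IsCycle) (hlen : C.length = n / 2)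
    (hsupp : {v : Fin n | v ∈ C.support} = ↑S) :
    IsEulerianGraph
      ((⊤ : SimpleGraph (Fin n)).deleteEdges (M.edgeSet ∪ {e | e ∈ C.edges})) ∧
    ((⊤ : SimpleGraph (Fin n)).deleteEdges
        (M.edgeSet ∪ {e | e ∈ C.edges})).edgeFinset.card = n * (n - 1) / 2 - n := by
  classical
  have hn2 : n % 2 = 0 := Nat.even_iff.mp heven
  set D : Set (Sym2 (Fin n)) := M.edgeSet ∪ {e | e ∈ C.edges} with hD
  set Gd : SimpleGraph (Fin n) := (⊤ : SimpleGraph (Fin n)).deleteEdges D with hGd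
  have hm : ∀ v : Fin n, ∃! w, M.Adj v w := SimpleGraph.Subgraph.isPerfectMatching_iff.mp hM
  -- partner function
  have hpart : ∀ a : Fin n, M.Adj a (hm a).choose := fun a => (hm a).choose_spec.1
  have huniq : ∀ a w : Fin n, M.Adj a w → w = (hm a).choose :=
    fun a w h => (hm a).choose_spec.2 w h
  have hMne : ∀ ⦃a b : Fin n⦄, M.Adj a b → a ≠ b := fun a b h => (M.adj_sub h).ne
  -- endpoints of cycle edges are in S
  have hCS : ∀ ⦃a b : Fin n⦄, s(a, b) ∈ C.edges → a ∈ S := by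
    intro a b h
    have ha : a ∈ {v : Fin n | v ∈ C.support} := C.fst_mem_support_of_mem_edges h
    rw [hsupp] at ha
    exact ha
  have hCS' : ∀ ⦃a b : Fin n⦄, s(a, b) ∈ C.edges → b ∈ S := by
    intro a b h
    rw [Sym2.eq_swap] at h
    exact hCS h
  -- adjacency in the new graph
  have hadj : ∀ a b : Fin n, Gd.Adj a b ↔ a ≠ b ∧ ¬ M.Adj a b ∧ s(a, b) ∉ C.edges := by
    intro a b
    simp only [hGd, deleteEdges_adj, top_adj, hD, Set.mem_union, Set.mem_setOf_eq,
      Subgraph.mem_edgeSet, not_or]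
  -- cardinality of the complement
  have hSc : (Sᶜ : Finset (Fin n)).card = n / 2 := by
    rw [Finset.card_compl, Fintype.card_fin, hS]; omega
  -- from each vertex of S there is an edge into Sᶜ
  have hstep : ∀ v ∈ S, ∃ u, u ∉ S ∧ Gd.Adj v u := by
    intro v hv
    have h2 : 1 < (Sᶜ : Finset (Fin n)).card := by omega
    obtain ⟨u, hu, hune⟩ := Finset.exists_mem_ne h2 (hm v).choose
    have huS : u ∉ S := Finset.mem_compl.mp hu
    refine ⟨u, huS, (hadj v u).mpr ⟨?_, ?_, ?_⟩⟩
    · rintro rfl; exact huS hv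
    · intro h; exact hune (huniq v u h)
    · intro h; exact huS (hCS' h)
  -- any two distinct vertices of Sᶜ are adjacent
  have hcompladj : ∀ a b : Fin n, a ∉ S → b ∉ S → a ≠ b → Gd.Adj a b := by
    intro a b ha hb hne
    refine (hadj a b).mpr ⟨hne, ?_, fun h => ha (hCS h)⟩
    intro h
    have := hMcross a b h
    tauto
  -- connectedness
  have hconn : Gd.Connected := by
    rw [connected_iff]
    refine ⟨?_, ⟨⟨0, by omega⟩⟩⟩
    intro a b
    have hre : ∀ v : Fin n, ∃ u, u ∉ S ∧ Gd.Reachable v u := by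
      intro v
      by_cases hv : v ∈ S
      · obtain ⟨u, hu, ha⟩ := hstep v hv; exact ⟨u, hu, ha.reachable⟩
      · exact ⟨v, hv, Reachable.refl v⟩
    obtain ⟨ua, hua, ra⟩ := hre a
    obtain ⟨ub, hub, rb⟩ := hre b
    rcases eq_or_ne ua ub with rfl | hne
    · exact ra.trans rb.symm
    · exact (ra.trans (hcompladj ua ub hua hub hne).reachable).trans rb.symm
  -- every degree is even
  have hdeg : ∀ v : Fin n, Even (Gd.degree v) := by
    intro v
    have hnb : Gd.neighborFinset v
        = (Finset.univ.erase v).filter (fun w => s(v, w) ∉ D) := by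
      ext w
      simp only [mem_neighborFinset, hGd, deleteEdges_adj, top_adj, Finset.mem_filter,
        Finset.mem_erase, Finset.mem_univ, and_true]
      constructor
      · rintro ⟨h1, h2⟩; exact ⟨h1.symm, h2⟩
      · rintro ⟨h1, h2⟩; exact ⟨h1.symm, h2⟩
    have hsplit : ((Finset.univ.erase v).filter (fun w => s(v, w) ∈ D)).card
        + ((Finset.univ.erase v).filter (fun w => ¬ s(v, w) ∈ D)).card
        = (Finset.univ.erase v).card :=
      Finset.card_filter_add_card_filter_not _
    have herase : (Finset.univ.erase v).card = n - 1 := by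
      rw [Finset.card_erase_of_mem (Finset.mem_univ v), Finset.card_univ, Fintype.card_fin]
    have hdegeq : Gd.degree v
        = ((Finset.univ.erase v).filter (fun w => ¬ s(v, w) ∈ D)).card := by
      rw [← card_neighborFinset_eq_degree, hnb]
    -- split the removed edges at v
    have hAsplit : (Finset.univ.erase v).filter (fun w => s(v, w) ∈ D)
        = (Finset.univ.erase v).filter (fun w => M.Adj v w)
          ∪ (Finset.univ.erase v).filter (fun w => s(v, w) ∈ C.edges) := by
      ext w
      simp only [Finset.mem_filter, Finset.mem_union, hD, Set.mem_union, Set.mem_setOf_eq,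
        Subgraph.mem_edgeSet]
      tauto
    have hAm : (Finset.univ.erase v).filter (fun w => M.Adj v w) = {(hm v).choose} := by
      ext w
      simp only [Finset.mem_filter, Finset.mem_erase, Finset.mem_univ, and_true,
        Finset.mem_singleton]
      constructor
      · rintro ⟨-, h⟩; exact huniq v w h
      · rintro rfl; exact ⟨(hMne (hpart v)).symm, hpart v⟩
    -- the cycle edges at v, counted as a finset
    have hbij : ((Finset.univ.erase v).filter (fun w => s(v, w) ∈ C.edges)).card
        = (C.edges.toFinset.filter (fun e => v ∈ e)).card := by
      apply Finset.card_bij (fun w _ => s(v, w))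
      · intro w hw
        simp only [Finset.mem_filter, Finset.mem_erase, Finset.mem_univ, and_true] at hw
        simp only [Finset.mem_filter, List.mem_toFinset]
        exact ⟨hw.2, Sym2.mem_mk_left v w⟩
      · intro w₁ h₁ w₂ h₂ h
        exact Sym2.congr_right.mp h
      · intro e he
        simp only [Finset.mem_filter, List.mem_toFinset] at he
        obtain ⟨heC, hve⟩ := he
        have hnd : ¬ e.IsDiag := by
          have := C.edges_subset_edgeSet heC
          simpa using this
        refine ⟨Sym2.Mem.other hve, ?_, Sym2.other_spec hve⟩
        simp only [Finset.mem_filter, Finset.mem_erase, Finset.mem_univ, and_true]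
        refine ⟨Sym2.other_ne hnd hve, ?_⟩
        rw [Sym2.other_spec hve]
        exact heC
    have hcount : (C.edges.toFinset.filter (fun e => v ∈ e)).card
        = C.edges.countP (fun e => v ∈ e) := by
      rw [List.countP_eq_length_filter,
        ← List.toFinset_card_of_nodup (hC.isCircuit.isTrail.edges_nodup.filter _)]
      congr 1
      ext e
      simp
    have hceven : Even (C.edges.countP (fun e => v ∈ e)) :=
      (hC.isCircuit.isTrail.even_countP_edges_iff v).mpr (fun h => absurd rfl h)
    -- the matching edge at v is not a cycle edge
    have hdisjA : Disjoint ((Finset.univ.erase v).filter (fun w => M.Adj v w))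
        ((Finset.univ.erase v).filter (fun w => s(v, w) ∈ C.edges)) := by
      rw [Finset.disjoint_left]
      intro w hw₁ hw₂
      simp only [Finset.mem_filter] at hw₁ hw₂
      have hvS : v ∈ S := hCS hw₂.2
      have hwS : w ∈ S := hCS' hw₂.2
      exact ((hMcross v w hw₁.2).mp hvS) hwS
    have hAcard : ((Finset.univ.erase v).filter (fun w => s(v, w) ∈ D)).card
        = 1 + C.edges.countP (fun e => v ∈ e) := by
      rw [hAsplit, Finset.card_union_of_disjoint hdisjA, hAm, Finset.card_singleton, hbij, hcount]
    obtain ⟨k, hk⟩ := hceven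
    obtain ⟨m, hmn⟩ := heven
    refine ⟨m - 1 - k, ?_⟩
    omega
  -- cardinality of the matching edge set
  have hMcard : M.edgeSet.toFinset.card = n / 2 := by
    rw [← hS]
    symm
    apply Finset.card_bij (fun a _ => s(a, (hm a).choose))
    · intro a ha
      simp only [Set.mem_toFinset, Subgraph.mem_edgeSet]
      exact hpart a
    · intro a₁ h₁ a₂ h₂ h
      rw [Sym2.eq_iff] at h
      rcases h with ⟨h, -⟩ | ⟨h1, h2⟩
      · exact h
      · exfalso
        have : (hm a₂).choose ∉ S := (hMcross a₂ _ (hpart a₂)).mp h₂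
        rw [← h1] at this
        exact this h₁
    · intro e he
      simp only [Set.mem_toFinset] at he
      revert he
      induction e using Sym2.ind with
      | _ a b =>
        intro he
        rw [Subgraph.mem_edgeSet] at he
        by_cases ha : a ∈ S
        · exact ⟨a, ha, by rw [← huniq a b he]⟩
        · have hb : b ∈ S := by
            have := hMcross a b he
            by_contra hb
            exact ha (by tauto)
          refine ⟨b, hb, ?_⟩
          rw [← huniq b a he.symm, Sym2.eq_swap]
  -- cardinality of the cycle edge set
  have hCcard : C.edges.toFinset.card = n / 2 := by
    rw [List.toFinset_card_of_nodup hC.isCircuit.isTrail.edges_nodup, C.length_edges, hlen]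
  -- the two removed edge sets are disjoint
  have hMC : ∀ e : Sym2 (Fin n), e ∈ M.edgeSet → e ∉ C.edges := by
    intro e
    induction e using Sym2.ind with
    | _ a b =>
      intro heM heC
      rw [Subgraph.mem_edgeSet] at heM
      exact ((hMcross a b heM).mp (hCS heC)) (hCS' heC)
  have hdisjMC : Disjoint M.edgeSet.toFinset C.edges.toFinset := by
    rw [Finset.disjoint_left]
    intro e heM heC
    rw [Set.mem_toFinset] at heM
    rw [List.mem_toFinset] at heC
    exact hMC e heM heC
  have hDfin : D = ↑(M.edgeSet.toFinset ∪ C.edges.toFinset) := by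
    ext e
    simp [hD]
  have hsub : M.edgeSet.toFinset ∪ C.edges.toFinset
      ⊆ (⊤ : SimpleGraph (Fin n)).edgeFinset := by
    intro e he
    rw [Finset.mem_union] at he
    rw [mem_edgeFinset]
    rcases he with he | he
    · rw [Set.mem_toFinset] at he
      exact M.edgeSet_subset he
    · rw [List.mem_toFinset] at he
      exact C.edges_subset_edgeSet he
  have hcard : Gd.edgeFinset.card = n * (n - 1) / 2 - n := by
    have : Gd.edgeFinset
        = (⊤ : SimpleGraph (Fin n)).edgeFinset \ (M.edgeSet.toFinset ∪ C.edges.toFinset) := by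
      ext e
      rw [mem_edgeFinset, hGd, edgeSet_deleteEdges]
      simp only [Set.mem_diff, hD, Set.mem_union, Set.mem_setOf_eq, Finset.mem_sdiff,
        mem_edgeFinset, Finset.mem_union, Set.mem_toFinset, List.mem_toFinset, not_or]
    rw [this, Finset.card_sdiff_of_subset hsub, card_edgeFinset_top_eq_card_choose_two,
      Fintype.card_fin, Nat.choose_two_right, Finset.card_union_of_disjoint hdisjMC,
      hMcard, hCcard]
    omega
  exact ⟨⟨hconn, fun v => by convert hdeg v⟩, hcard⟩
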